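/- The bigraft algebra (M, m, ≻, ≺) of nonempty {l,r}-decorated planar forests is the free bigraft algebra on one generator: for any bigraft algebra A and any a ∈ A, there exists a unique map φ : M → A preserving all three operations with φ(•) = a, where • is the one-vertex tree. -/

import Mathlib

/-- A planar rooted tree with `{l,r}`-decorated edges (admissible: no `r`-edge left of an
`l`-edge at a vertex): a tree is `B(F ⊗ G)` with `F` the `l`-children and `G` the
`r`-children. -/
inductive DTree : Type
  | node : List DTree → List DTree → DTree

/-- A nonempty planar decorated forest. -/
def DForest : Type := { l : List DTree // l ≠ [] }

/-- Left graft on lists: graft `g` on the root of the first tree, on the left. -/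
def succL (g : List DTree) : List DTree → List DTree
  | [] => []
  | (DTree.node l r) :: rest => DTree.node (g ++ l) r :: rest

/-- Right graft on lists: graft `f` on the root of the last tree of the first argument,
on the right. -/
def precL : List DTree → List DTree → List DTree
  | [], _ => []
  | [DTree.node l r], f => [DTree.node l (r ++ f)]
  | t :: t' :: ts, f => t :: precL (t' :: ts) f

theorem succL_ne (g : List DTree) : ∀ f : List DTree, f ≠ [] → succL g f ≠ [] := by
  intro f hf
  match f with
  | [] => exact absurd rfl hf
  | (DTree.node l r) :: rest => simp [succL]

theorem precL_ne : ∀ (g f : List DTree), g ≠ [] → precL g f ≠ [] := by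
  intro g f hg
  match g with
  | [] => exact absurd rfl hg
  | [DTree.node l r] => simp [precL]
  | t :: t' :: ts => simp [precL]

/-- Concatenation of forests. -/
def catF (x y : DForest) : DForest :=
  ⟨x.1 ++ y.1, fun h => x.2 (List.append_eq_nil_iff.mp h).1⟩

/-- Left graft `x ≻ y` of forests. -/
def succF (x y : DForest) : DForest := ⟨succL x.1 y.1, succL_ne x.1 y.1 y.2⟩

/-- Right graft `x ≺ y` of forests. -/
def precF (x y : DForest) : DForest := ⟨precL x.1 y.1, precL_ne x.1 y.1 x.2⟩

/-- Bilinear extension to the free vector space `M = K[DForest]` (the augmentation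
ideal of `BT`) of a binary operation on forests. -/
noncomputable def lift2 (K : Type*) [Field K] (f : DForest → DForest → DForest) :
    (DForest →₀ K) →ₗ[K] (DForest →₀ K) →ₗ[K] (DForest →₀ K) :=
  Finsupp.lift ((DForest →₀ K) →ₗ[K] (DForest →₀ K)) K DForest
    (fun a => Finsupp.lift (DForest →₀ K) K DForest
      (fun b => Finsupp.single (f a b) (1 : K)))


/-- The one-vertex tree `•`, generator of `M`. -/
def unitF : DForest := ⟨[DTree.node [] []], by simp⟩


/-! ### Auxiliary development -/

section Aux

variable {A : Type*}

mutual
/-- Value of the canonical morphism on a tree. -/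
def phiT (s p q : A → A → A) (a : A) : DTree → A
  | .node [] [] => a
  | .node [] (r₁ :: rs) => q a (phiL s p q a (r₁ :: rs))
  | .node (l₁ :: ls) [] => p (phiL s p q a (l₁ :: ls)) a
  | .node (l₁ :: ls) (r₁ :: rs) =>
      q (p (phiL s p q a (l₁ :: ls)) a) (phiL s p q a (r₁ :: rs))

/-- Value of the canonical morphism on a forest. -/
def phiL (s p q : A → A → A) (a : A) : List DTree → A
  | [] => a
  | [t] => phiT s p q a t
  | t :: t' :: ts => s (phiT s p q a t) (phiL s p q a (t' :: ts))
end

variable (s p q : A → A → A) (a : A)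

theorem phiL_cons (t : DTree) (x : List DTree) (hx : x ≠ []) :
    phiL s p q a (t :: x) = s (phiT s p q a t) (phiL s p q a x) := by
  match x with
  | [] => exact absurd rfl hx
  | t' :: ts => rfl

variable (hs1 : ∀ x y z : A, s (s x y) z = s x (s y z))
  (hs2 : ∀ x y z : A, p (s x y) z = p x (p y z))
  (hs3 : ∀ x y z : A, s (p x y) z = p x (s y z))
  (hs4 : ∀ x y z : A, q (q x y) z = q x (s y z))
  (hs5 : ∀ x y z : A, q (s x y) z = s x (q y z))
  (hs6 : ∀ x y z : A, q (p x y) z = p x (q y z))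

include hs1 in
theorem phiL_append : ∀ (g f : List DTree), g ≠ [] → f ≠ [] →
    phiL s p q a (g ++ f) = s (phiL s p q a g) (phiL s p q a f)
  | [], _, hg, _ => absurd rfl hg
  | [t], f, _, hf => by
      rw [List.singleton_append, phiL_cons s p q a t f hf]; rfl
  | t :: t' :: ts, f, _, hf => by
      have hne : (t' :: ts : List DTree) ++ f ≠ [] := by simp
      rw [List.cons_append, phiL_cons s p q a t _ hne,
        phiL_append (t' :: ts) f (by simp) hf, phiL_cons s p q a t (t' :: ts) (by simp),
        hs1]

include hs1 hs2 hs6 in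
theorem phiT_succ (g l r : List DTree) (hg : g ≠ []) :
    phiT s p q a (.node (g ++ l) r) = p (phiL s p q a g) (phiT s p q a (.node l r)) := by
  match g, l, r with
  | g₁ :: gs, [], [] => simp [phiT]
  | g₁ :: gs, [], r₁ :: rs => simp [phiT, hs6]
  | g₁ :: gs, l₁ :: ls, [] =>
      show phiT s p q a (.node ((g₁ :: gs) ++ (l₁ :: ls)) []) = _
      rw [show phiT s p q a (.node ((g₁ :: gs) ++ (l₁ :: ls)) []) =
        p (phiL s p q a ((g₁ :: gs) ++ (l₁ :: ls))) a from by
          cases h : (g₁ :: gs : List DTree) ++ (l₁ :: ls) with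
          | nil => simp at h
          | cons u us => rfl]
      rw [phiL_append s p q a hs1 _ _ (by simp) (by simp), hs2]; rfl
  | g₁ :: gs, l₁ :: ls, r₁ :: rs =>
      rw [show phiT s p q a (.node ((g₁ :: gs) ++ (l₁ :: ls)) (r₁ :: rs)) =
        q (p (phiL s p q a ((g₁ :: gs) ++ (l₁ :: ls))) a) (phiL s p q a (r₁ :: rs)) from by
          cases h : (g₁ :: gs : List DTree) ++ (l₁ :: ls) with
          | nil => simp at h
          | cons u us => rfl]
      rw [phiL_append s p q a hs1 _ _ (by simp) (by simp), hs2, hs6]; rfl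

include hs1 hs2 hs3 hs6 in
theorem phiL_succ (g f : List DTree) (hg : g ≠ []) (hf : f ≠ []) :
    phiL s p q a (succL g f) = p (phiL s p q a g) (phiL s p q a f) := by
  match f with
  | [] => exact absurd rfl hf
  | (DTree.node l r) :: rest =>
      show phiL s p q a (DTree.node (g ++ l) r :: rest) = _
      match rest with
      | [] =>
          show phiT s p q a (.node (g ++ l) r) = _
          rw [phiT_succ s p q a hs1 hs2 hs6 g l r hg]; rfl
      | u :: us =>
          rw [phiL_cons s p q a _ _ (by simp), phiT_succ s p q a hs1 hs2 hs6 g l r hg,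
            hs3, phiL_cons s p q a _ (u :: us) (by simp)]

include hs1 hs4 in
theorem phiT_prec (l r f : List DTree) (hf : f ≠ []) :
    phiT s p q a (.node l (r ++ f)) = q (phiT s p q a (.node l r)) (phiL s p q a f) := by
  match f with
  | [] => exact absurd rfl hf
  | f₁ :: fs =>
    match l, r with
    | [], [] => simp [phiT]
    | [], r₁ :: rs =>
        show phiT s p q a (.node [] ((r₁ :: rs) ++ (f₁ :: fs))) = _
        rw [show phiT s p q a (.node [] ((r₁ :: rs) ++ (f₁ :: fs))) =
          q a (phiL s p q a ((r₁ :: rs) ++ (f₁ :: fs))) from by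
            cases h : (r₁ :: rs : List DTree) ++ (f₁ :: fs) with
            | nil => simp at h
            | cons u us => rfl]
        rw [phiL_append s p q a hs1 _ _ (by simp) (by simp), ← hs4]; rfl
    | l₁ :: ls, [] => simp [phiT]
    | l₁ :: ls, r₁ :: rs =>
        rw [show phiT s p q a (.node (l₁ :: ls) ((r₁ :: rs) ++ (f₁ :: fs))) =
          q (p (phiL s p q a (l₁ :: ls)) a)
            (phiL s p q a ((r₁ :: rs) ++ (f₁ :: fs))) from by
            cases h : (r₁ :: rs : List DTree) ++ (f₁ :: fs) with
            | nil => simp at h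
            | cons u us => rfl]
        rw [phiL_append s p q a hs1 _ _ (by simp) (by simp), ← hs4]; rfl

include hs1 hs4 hs5 in
theorem phiL_prec : ∀ (g f : List DTree), g ≠ [] → f ≠ [] →
    phiL s p q a (precL g f) = q (phiL s p q a g) (phiL s p q a f)
  | [], _, hg, _ => absurd rfl hg
  | [DTree.node l r], f, _, hf => by
      show phiT s p q a (.node l (r ++ f)) = _
      rw [phiT_prec s p q a hs1 hs4 l r f hf]; rfl
  | t :: t' :: ts, f, _, hf => by
      simp only [precL]
      rw [phiL_cons s p q a t _ (precL_ne (t' :: ts) f (by simp)),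
        phiL_prec (t' :: ts) f (by simp) hf, ← hs5,
        phiL_cons s p q a t (t' :: ts) (by simp)]

end Aux

theorem lift2_single_one (K : Type*) [Field K] (f : DForest → DForest → DForest)
    (z w : DForest) :
    lift2 K f (Finsupp.single z 1) (Finsupp.single w 1) = Finsupp.single (f z w) 1 := by
  simp [lift2]

theorem lift_phi_single (K : Type*) [Field K] {A : Type*} [AddCommGroup A] [Module K A]
    (g : DForest → A) (z : DForest) (c : K) :
    Finsupp.lift A K DForest g (Finsupp.single z c) = c • g z := by
  simp

theorem hom_of_single (K : Type*) [Field K] {A : Type*} [AddCommGroup A] [Module K A]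
    (f : DForest → DForest → DForest) (op : A →ₗ[K] A →ₗ[K] A)
    (φ : (DForest →₀ K) →ₗ[K] A)
    (h : ∀ z w : DForest, φ (Finsupp.single (f z w) 1)
      = op (φ (Finsupp.single z 1)) (φ (Finsupp.single w 1))) :
    ∀ x y : DForest →₀ K, φ (lift2 K f x y) = op (φ x) (φ y) := by
  intro x y
  induction x using Finsupp.induction_linear with
  | zero => simp
  | add x₁ x₂ ih₁ ih₂ => simp [ih₁, ih₂]
  | single z c =>
    induction y using Finsupp.induction_linear with
    | zero => simp
    | add y₁ y₂ ih₁ ih₂ => simp [ih₁, ih₂]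
    | single w d =>
      have ez : (Finsupp.single z c : DForest →₀ K) = c • Finsupp.single z 1 := by
        rw [Finsupp.smul_single, smul_eq_mul, mul_one]
      have ew : (Finsupp.single w d : DForest →₀ K) = d • Finsupp.single w 1 := by
        rw [Finsupp.smul_single, smul_eq_mul, mul_one]
      rw [ez, ew]
      simp only [map_smul, LinearMap.smul_apply, smul_smul, lift2_single_one, h]

theorem sizeOf_dtree_pos (t : DTree) : 1 ≤ sizeOf t := by
  cases t with | node l r => simp; omega

/-- `(M, m, ≻, ≺)` is the free bigraft algebra on one generator: for any
bigraft algebra `A` and any `a ∈ A` there is a unique linear map `φ : M → A`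
preserving the three operations with `φ(•) = a`. -/
theorem M_free_bigraft (K : Type*) [Field K] {A : Type*} [AddCommGroup A] [Module K A]
    (starA succA precA : A →ₗ[K] A →ₗ[K] A)
    (h1 : ∀ x y z : A, starA (starA x y) z = starA x (starA y z))
    (h2 : ∀ x y z : A, succA (starA x y) z = succA x (succA y z))
    (h3 : ∀ x y z : A, starA (succA x y) z = succA x (starA y z))
    (h4 : ∀ x y z : A, precA (precA x y) z = precA x (starA y z))
    (h5 : ∀ x y z : A, precA (starA x y) z = starA x (precA y z))
    (h6 : ∀ x y z : A, precA (succA x y) z = succA x (precA y z))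
    (a : A) :
    ∃! φ : (DForest →₀ K) →ₗ[K] A,
      (∀ x y : DForest →₀ K, φ (lift2 K catF x y) = starA (φ x) (φ y)) ∧
      (∀ x y : DForest →₀ K, φ (lift2 K succF x y) = succA (φ x) (φ y)) ∧
      (∀ x y : DForest →₀ K, φ (lift2 K precF x y) = precA (φ x) (φ y)) ∧
      φ (Finsupp.single unitF (1 : K)) = a := by
  refine ⟨Finsupp.lift A K DForest
      (fun z => phiL (fun x y => starA x y) (fun x y => succA x y)
        (fun x y => precA x y) a z.1), ⟨?_, ?_, ?_, ?_⟩, ?_⟩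
  · refine hom_of_single K catF starA _ fun z w => ?_
    rw [lift_phi_single, lift_phi_single, lift_phi_single, one_smul, one_smul, one_smul]
    exact phiL_append _ _ _ _ h1 z.1 w.1 z.2 w.2
  · refine hom_of_single K succF succA _ fun z w => ?_
    rw [lift_phi_single, lift_phi_single, lift_phi_single, one_smul, one_smul, one_smul]
    exact phiL_succ _ _ _ _ h1 h2 h3 h6 z.1 w.1 z.2 w.2
  · refine hom_of_single K precF precA _ fun z w => ?_
    rw [lift_phi_single, lift_phi_single, lift_phi_single, one_smul, one_smul, one_smul]
    exact phiL_prec _ _ _ _ h1 h4 h5 z.1 w.1 z.2 w.2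
  · rw [lift_phi_single, one_smul]
    simp [unitF, phiL, phiT]
  · rintro ψ ⟨hstar, hsucc, hprec, hunit⟩
    have Hstar : ∀ z w : DForest, ψ (Finsupp.single (catF z w) 1)
        = starA (ψ (Finsupp.single z 1)) (ψ (Finsupp.single w 1)) := fun z w => by
      rw [← lift2_single_one K catF z w]; exact hstar _ _
    have Hsucc : ∀ z w : DForest, ψ (Finsupp.single (succF z w) 1)
        = succA (ψ (Finsupp.single z 1)) (ψ (Finsupp.single w 1)) := fun z w => by
      rw [← lift2_single_one K succF z w]; exact hsucc _ _
    have Hprec : ∀ z w : DForest, ψ (Finsupp.single (precF z w) 1)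
        = precA (ψ (Finsupp.single z 1)) (ψ (Finsupp.single w 1)) := fun z w => by
      rw [← lift2_single_one K precF z w]; exact hprec _ _
    have key : ∀ (n : ℕ) (l : List DTree) (hl : l ≠ []), sizeOf l ≤ n →
        ψ (Finsupp.single (⟨l, hl⟩ : DForest) 1)
          = phiL (fun x y => starA x y) (fun x y => succA x y)
              (fun x y => precA x y) a l := by
      intro n
      induction n with
      | zero =>
          intro l hl hsz
          exfalso
          cases l with
          | nil => exact hl rfl
          | cons t ts => simp at hsz
      | succ n ih =>
          intro l hl hsz
          match l, hl with
          | [DTree.node [] []], hl =>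
              have e : (⟨[DTree.node [] []], hl⟩ : DForest) = unitF := rfl
              rw [e, hunit]; simp [phiL, phiT]
          | [DTree.node (l₁ :: ls) []], hl =>
              have hne : (l₁ :: ls : List DTree) ≠ [] := by simp
              have e : (⟨[DTree.node (l₁ :: ls) []], hl⟩ : DForest)
                  = succF ⟨l₁ :: ls, hne⟩ unitF := by
                apply Subtype.ext; simp [succF, succL, unitF]
              have hsz' : sizeOf (l₁ :: ls : List DTree) ≤ n := by
                simp at hsz ⊢; omega
              rw [e, Hsucc ⟨l₁ :: ls, hne⟩ unitF, hunit, ih _ hne hsz']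
              simp [phiL, phiT]
          | [DTree.node [] (r₁ :: rs)], hl =>
              have hne : (r₁ :: rs : List DTree) ≠ [] := by simp
              have e : (⟨[DTree.node [] (r₁ :: rs)], hl⟩ : DForest)
                  = precF unitF ⟨r₁ :: rs, hne⟩ := by
                apply Subtype.ext; simp [precF, precL, unitF]
              have hsz' : sizeOf (r₁ :: rs : List DTree) ≤ n := by
                simp at hsz ⊢; omega
              rw [e, Hprec unitF ⟨r₁ :: rs, hne⟩, hunit, ih _ hne hsz']
              simp [phiL, phiT]
          | [DTree.node (l₁ :: ls) (r₁ :: rs)], hl =>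
              have hne1 : ([DTree.node (l₁ :: ls) []] : List DTree) ≠ [] := by simp
              have hner : (r₁ :: rs : List DTree) ≠ [] := by simp
              have e : (⟨[DTree.node (l₁ :: ls) (r₁ :: rs)], hl⟩ : DForest)
                  = precF ⟨[DTree.node (l₁ :: ls) []], hne1⟩ ⟨r₁ :: rs, hner⟩ := by
                apply Subtype.ext; simp [precF, precL]
              have p1 := sizeOf_dtree_pos r₁
              have hsz1 : sizeOf ([DTree.node (l₁ :: ls) []] : List DTree) ≤ n := by
                simp at hsz ⊢; omega
              have hsz2 : sizeOf (r₁ :: rs : List DTree) ≤ n := by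
                simp at hsz ⊢; omega
              rw [e, Hprec ⟨[DTree.node (l₁ :: ls) []], hne1⟩ ⟨r₁ :: rs, hner⟩, ih _ hne1 hsz1, ih _ hner hsz2]
              simp [phiL, phiT]
          | t :: t' :: ts, hl =>
              have hne1 : ([t] : List DTree) ≠ [] := by simp
              have hne2 : (t' :: ts : List DTree) ≠ [] := by simp
              have e : (⟨t :: t' :: ts, hl⟩ : DForest)
                  = catF ⟨[t], hne1⟩ ⟨t' :: ts, hne2⟩ := by
                apply Subtype.ext; simp [catF]
              have p1 := sizeOf_dtree_pos t
              have p2 := sizeOf_dtree_pos t'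
              have hsz1 : sizeOf ([t] : List DTree) ≤ n := by
                simp at hsz ⊢; omega
              have hsz2 : sizeOf (t' :: ts : List DTree) ≤ n := by
                simp at hsz ⊢; omega
              rw [e, Hstar ⟨[t], hne1⟩ ⟨t' :: ts, hne2⟩, ih _ hne1 hsz1, ih _ hne2 hsz2]
              simp [phiL]
    refine Finsupp.lhom_ext fun u c => ?_
    obtain ⟨ul, hu⟩ := u
    have ec : (Finsupp.single (⟨ul, hu⟩ : DForest) c)
        = c • Finsupp.single (⟨ul, hu⟩ : DForest) (1 : K) := by
      rw [Finsupp.smul_single, smul_eq_mul, mul_one]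
    erw [ec, map_smul, map_smul, key (sizeOf ul) ul hu le_rfl,
      lift_phi_single, one_smul]
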